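/- The constraint set defined by N·log₂(1 + 1/D) ≤ T·B·log₂(1 + E·H/(T·δ²)) over variables (D, T, E) ∈ (0,∞)³, with constants N, B, H, δ² > 0, is a convex set. -/

import Mathlib

open Real Set

lemma convexOn_aux : ConvexOn ℝ (Set.Ioi (0:ℝ)) (fun x => Real.log (x+1) - Real.log x) := by
  have hint : interior (Set.Ioi (0:ℝ)) = Set.Ioi 0 := interior_Ioi
  refine convexOn_of_hasDerivWithinAt2_nonneg (f' := fun x => (x+1)⁻¹ - x⁻¹)
    (f'' := fun x => -((x+1)^2)⁻¹ + (x^2)⁻¹) (convex_Ioi 0) ?_ ?_ ?_ ?_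
  · refine ContinuousOn.sub ?_ ?_
    · exact (Real.continuousOn_log.comp (by fun_prop) (fun x hx => by
        simp only [Set.mem_Ioi] at hx; simp; positivity)).congr (fun x hx => rfl)
    · exact Real.continuousOn_log.mono (fun x hx => by
        simp only [Set.mem_Ioi] at hx; simp; positivity)
  · intro x hx
    rw [hint] at hx ⊢
    have hx0 : (0:ℝ) < x := hx
    have h1 : HasDerivAt (fun x : ℝ => Real.log (x+1)) (x+1)⁻¹ x := by
      have := (Real.hasDerivAt_log (by positivity : x + 1 ≠ 0)).comp x
        ((hasDerivAt_id x).add_const 1)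
      simpa [Function.comp_def] using this
    exact ((h1.sub (Real.hasDerivAt_log hx0.ne')).hasDerivWithinAt)
  · intro x hx
    rw [hint] at hx ⊢
    have hx0 : (0:ℝ) < x := hx
    have h1 : HasDerivAt (fun x : ℝ => (x+1)⁻¹) (-((x+1)^2)⁻¹) x := by
      have := ((hasDerivAt_inv (by positivity : x + 1 ≠ 0)).comp x
        ((hasDerivAt_id x).add_const 1))
      simpa [Function.comp_def] using this
    have h2 : HasDerivAt (fun x : ℝ => x⁻¹) (-(x^2)⁻¹) x := by
      simpa using hasDerivAt_inv hx0.ne'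
    have := h1.sub h2
    simpa [sub_neg_eq_add, Pi.sub_def] using this.hasDerivWithinAt
  · intro x hx
    rw [hint] at hx
    have hx0 : (0:ℝ) < x := hx
    have h : ((x+1)^2)⁻¹ ≤ (x^2)⁻¹ := by
      apply inv_anti₀ (by positivity)
      nlinarith
    linarith

lemma log_one_add_inv (x : ℝ) (hx : 0 < x) :
    Real.log (1 + 1 / x) = Real.log (x + 1) - Real.log x := by
  have : (1:ℝ) + 1 / x = (x + 1) / x := by field_simp
  rw [this, Real.log_div (by positivity) hx.ne']

/-- The successful-transmission constraint set
`{(D, T, E) ∈ (0,∞)³ : N·log₂(1 + 1/D) ≤ T·B·log₂(1 + E·H/(T·δ²))}` is convex. -/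
theorem transmission_constraint_convex (N B H δ2 : ℝ)
    (hN : 0 < N) (hB : 0 < B) (hH : 0 < H) (hδ : 0 < δ2) :
    Convex ℝ {p : ℝ × ℝ × ℝ | 0 < p.1 ∧ 0 < p.2.1 ∧ 0 < p.2.2 ∧
      N * Real.logb 2 (1 + 1 / p.1) ≤
        p.2.1 * B * Real.logb 2 (1 + p.2.2 * H / (p.2.1 * δ2))} := by
  rintro ⟨D₁, T₁, E₁⟩ ⟨hD₁, hT₁, hE₁, h₁⟩ ⟨D₂, T₂, E₂⟩ ⟨hD₂, hT₂, hE₂, h₂⟩ a b ha hb hab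
  simp only [Set.mem_setOf_eq, Prod.smul_mk, Prod.mk_add_mk, smul_eq_mul] at *
  have hlog2 : (0:ℝ) < Real.log 2 := Real.log_pos one_lt_two
  have key : ∀ x y : ℝ, 0 < x → 0 < y → 0 < a * x + b * y := by
    intro x y hx hy
    rcases ha.lt_or_eq with h | h
    · have : 0 ≤ b * y := mul_nonneg hb hy.le
      nlinarith
    · have hb' : b = 1 := by linarith
      rw [← h, hb']; simpa
  have hD : 0 < a * D₁ + b * D₂ := key _ _ hD₁ hD₂
  have hT : 0 < a * T₁ + b * T₂ := key _ _ hT₁ hT₂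
  have hE : 0 < a * E₁ + b * E₂ := key _ _ hE₁ hE₂
  refine ⟨hD, hT, hE, ?_⟩
  set T := a * T₁ + b * T₂ with hTdef
  set E := a * E₁ + b * E₂ with hEdef
  -- positivity of the log arguments
  have hc₁ : (0:ℝ) < 1 + E₁ * H / (T₁ * δ2) := by positivity
  have hc₂ : (0:ℝ) < 1 + E₂ * H / (T₂ * δ2) := by positivity
  have hc : (0:ℝ) < 1 + E * H / (T * δ2) := by positivity
  -- Step 1: convexity of D ↦ log (1 + 1/D)
  have step1 : Real.log (1 + 1 / (a * D₁ + b * D₂)) ≤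
      a * Real.log (1 + 1 / D₁) + b * Real.log (1 + 1 / D₂) := by
    have := convexOn_aux.2 (Set.mem_Ioi.2 hD₁) (Set.mem_Ioi.2 hD₂) ha hb hab
    simp only [smul_eq_mul] at this
    rw [log_one_add_inv _ hD, log_one_add_inv _ hD₁, log_one_add_inv _ hD₂]
    linarith
  -- Step 3: perspective concavity
  have step3 : a * T₁ * Real.log (1 + E₁ * H / (T₁ * δ2)) +
      b * T₂ * Real.log (1 + E₂ * H / (T₂ * δ2)) ≤ T * Real.log (1 + E * H / (T * δ2)) := by
    set lam := a * T₁ / T with hlam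
    set mu := b * T₂ / T with hmu
    have hlam0 : 0 ≤ lam := by positivity
    have hmu0 : 0 ≤ mu := by positivity
    have hsum : lam + mu = 1 := by
      rw [hlam, hmu, ← add_div, hTdef]; exact div_self hT.ne'
    have hcomb : lam * (1 + E₁ * H / (T₁ * δ2)) + mu * (1 + E₂ * H / (T₂ * δ2))
        = 1 + E * H / (T * δ2) := by
      rw [hlam, hmu, hEdef, hTdef]
      field_simp [show a * T₁ + b * T₂ ≠ 0 from hT.ne']
      ring
    have := strictConcaveOn_log_Ioi.concaveOn.2 (Set.mem_Ioi.2 hc₁) (Set.mem_Ioi.2 hc₂)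
      hlam0 hmu0 hsum
    simp only [smul_eq_mul] at this
    rw [hcomb] at this
    -- this : lam * log c₁ + mu * log c₂ ≤ log c
    have hT' : T ≠ 0 := hT.ne'
    have := mul_le_mul_of_nonneg_left this hT.le
    calc a * T₁ * Real.log (1 + E₁ * H / (T₁ * δ2)) +
          b * T₂ * Real.log (1 + E₂ * H / (T₂ * δ2))
        = T * (lam * Real.log (1 + E₁ * H / (T₁ * δ2)) +
            mu * Real.log (1 + E₂ * H / (T₂ * δ2))) := by
          rw [hlam, hmu]; field_simp
      _ ≤ T * Real.log (1 + E * H / (T * δ2)) := this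
  -- combine everything, working in `log` instead of `logb`
  rw [Real.logb, Real.logb] at *
  rw [← mul_div_assoc, ← mul_div_assoc] at h₁ h₂ ⊢
  rw [div_le_div_iff_of_pos_right hlog2] at h₁ h₂ ⊢
  nlinarith [mul_le_mul_of_nonneg_left step1 hN.le,
    mul_le_mul_of_nonneg_left h₁ ha,
    mul_le_mul_of_nonneg_left h₂ hb,
    mul_le_mul_of_nonneg_left step3 hB.le]
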